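/- A ring R is left completely virtually semisimple if and only if every free left R-module is completely virtually semisimple; equivalently, R is left completely virtually semisimple if and only if every projective left R-module is virtually semisimple. -/

import Mathlib

universe u v w

/-- A left `R`-module `M` is *virtually semisimple* if every submodule of `M` is
isomorphic, as an `R`-module, to a direct summand of `M`. -/
def IsVirtuallySemisimple (R : Type u) [Ring R] (M : Type v) [AddCommGroup M] [Module R M] :
    Prop :=
  ∀ N : Submodule R M, ∃ K : Submodule R M, (∃ K' : Submodule R M, IsCompl K K') ∧
    Nonempty (N ≃ₗ[R] K)

/-- A module is *completely virtually semisimple* if every submodule is virtually semisimple. -/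
def IsCompletelyVirtuallySemisimple (R : Type u) [Ring R] (M : Type v) [AddCommGroup M]
    [Module R M] : Prop :=
  ∀ N : Submodule R M, IsVirtuallySemisimple R N

set_option linter.unusedSectionVars false

namespace VSSAux

section Transport

variable {R : Type u} [Ring R]

theorem vs_congr {M : Type v} {M' : Type w} [AddCommGroup M] [Module R M]
    [AddCommGroup M'] [Module R M'] (e : M ≃ₗ[R] M')
    (h : IsVirtuallySemisimple R M') : IsVirtuallySemisimple R M := by
  intro N
  obtain ⟨K, ⟨K', hc⟩, ⟨g⟩⟩ := h (N.map (e : M →ₗ[R] M'))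
  refine ⟨K.map (e.symm : M' →ₗ[R] M), ⟨K'.map (e.symm : M' →ₗ[R] M), ?_⟩, ⟨?_⟩⟩
  · have := (Submodule.orderIsoMapComap (e.symm : M' ≃ₗ[R] M)).isCompl hc
    simpa [Submodule.orderIsoMapComap_apply'] using this
  · exact ((e.submoduleMap N).trans g).trans (e.symm.submoduleMap K)

theorem cvs_congr {M : Type v} {M' : Type w} [AddCommGroup M] [Module R M]
    [AddCommGroup M'] [Module R M'] (e : M ≃ₗ[R] M')
    (h : IsCompletelyVirtuallySemisimple R M') : IsCompletelyVirtuallySemisimple R M :=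
  fun N => vs_congr (e.submoduleMap N) (h (N.map (e : M →ₗ[R] M')))

theorem vs_self (h : IsCompletelyVirtuallySemisimple R R) : IsVirtuallySemisimple R R :=
  vs_congr (Submodule.topEquiv (R := R) (M := R)).symm (h ⊤)

theorem projective_of_isCompl {M : Type v} [AddCommGroup M] [Module R M]
    [Module.Projective R M] {K K' : Submodule R M} (hc : IsCompl K K') :
    Module.Projective R ↥K :=
  Module.Projective.of_split K.subtype (K.projectionOnto K' hc)
    (by ext x; simp [Submodule.projectionOnto_apply_left])

theorem projective_ideal (h : IsVirtuallySemisimple R R) (I : Submodule R R) :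
    Module.Projective R ↥I := by
  obtain ⟨K, ⟨K', hc⟩, ⟨g⟩⟩ := h I
  haveI := projective_of_isCompl hc
  exact Module.Projective.of_equiv g.symm


end Transport

section Prod

variable {R : Type u} [Ring R] {ι : Type w} [DecidableEq ι]

/-- `Π₀ i, (β i × γ i)` splits as a product. -/
noncomputable def dfinsuppProd {β γ : ι → Type v} [∀ i, AddCommGroup (β i)]
    [∀ i, AddCommGroup (γ i)] [∀ i, Module R (β i)] [∀ i, Module R (γ i)] :
    (Π₀ i, β i × γ i) ≃ₗ[R] (Π₀ i, β i) × (Π₀ i, γ i) :=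
  LinearEquiv.ofLinear
    ((DFinsupp.mapRange.linearMap fun i => LinearMap.fst R (β i) (γ i)).prod
      (DFinsupp.mapRange.linearMap fun i => LinearMap.snd R (β i) (γ i)))
    ((DFinsupp.mapRange.linearMap fun i => LinearMap.inl R (β i) (γ i)).coprod
      (DFinsupp.mapRange.linearMap fun i => LinearMap.inr R (β i) (γ i)))
    (by
      refine LinearMap.prod_ext (DFinsupp.lhom_ext fun i x => ?_)
        (DFinsupp.lhom_ext fun i x => ?_) <;>
      · simp only [LinearMap.coe_comp, Function.comp_apply, LinearMap.inl_apply,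
          LinearMap.inr_apply, LinearMap.coprod_apply, LinearMap.prod_apply,
          DFinsupp.mapRange.linearMap_apply, DFinsupp.mapRange_single, map_zero,
          LinearMap.id_comp, Function.prod_apply, add_zero, zero_add, LinearMap.fst_apply,
          LinearMap.snd_apply, DFinsupp.single_zero])
    (by
      refine DFinsupp.lhom_ext fun i x => ?_
      simp only [LinearMap.coe_comp, Function.comp_apply, LinearMap.prod_apply, Function.prod_apply,
        DFinsupp.mapRange.linearMap_apply, DFinsupp.mapRange_single, LinearMap.coprod_apply,
        LinearMap.fst_apply, LinearMap.snd_apply, LinearMap.inl_apply, LinearMap.inr_apply,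
        LinearMap.id_apply, ← DFinsupp.single_add, Prod.mk_add_mk, add_zero, zero_add])


end Prod

section Core

variable {R : Type u} [Ring R] {ι : Type w} [LinearOrder ι] [WellFoundedLT ι]

/-- The `i`-th "layer ideal" of a submodule `N` of `ι →₀ R`. -/
noncomputable def idl (N : Submodule R (ι →₀ R)) (i : ι) : Submodule R R :=
  (N ⊓ Finsupp.supported R R (Set.Iic i)).map (Finsupp.lapply i)

theorem idl_mono {P N : Submodule R (ι →₀ R)} (h : P ≤ N) (i : ι) : idl P i ≤ idl N i :=
  Submodule.map_mono (inf_le_inf_right _ h)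

theorem exists_equiv_dfinsupp (hproj : ∀ I : Submodule R R, Module.Projective R ↥I)
    (N : Submodule R (ι →₀ R)) : Nonempty (↥N ≃ₗ[R] Π₀ i, ↥(idl N i)) := by
  classical
  set Nle : ι → Submodule R (ι →₀ R) := fun i => N ⊓ Finsupp.supported R R (Set.Iic i) with hNle
  have hres : ∀ i, ∀ x ∈ Nle i, (Finsupp.lapply i : (ι →₀ R) →ₗ[R] R) x ∈ idl N i := by
    intro i x hx
    exact Submodule.mem_map_of_mem hx
  set φ : ∀ i, ↥(Nle i) →ₗ[R] ↥(idl N i) :=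
    fun i => (Finsupp.lapply i : (ι →₀ R) →ₗ[R] R).restrict (hres i) with hφ
  have hφsurj : ∀ i, Function.Surjective (φ i) := by
    rintro i ⟨y, x, hx, rfl⟩
    exact ⟨⟨x, hx⟩, rfl⟩
  have hsec : ∀ i, ∃ sᵢ : ↥(idl N i) →ₗ[R] ↥(Nle i), (φ i) ∘ₗ sᵢ = LinearMap.id := by
    intro i
    haveI := hproj (idl N i)
    exact Module.projective_lifting_property (φ i) LinearMap.id (hφsurj i)
  choose s hs using hsec
  -- basic facts about the sections
  have h1 : ∀ i (x : ↥(idl N i)), ((s i x : ι →₀ R)) i = (x : R) := by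
    intro i x
    have := congrArg (fun g : ↥(idl N i) →ₗ[R] ↥(idl N i) => ((g x : ↥(idl N i)) : R)) (hs i)
    simpa [hφ, LinearMap.restrict_apply, Finsupp.lapply_apply] using this
  have h2 : ∀ i (x : ↥(idl N i)), ((s i x : ι →₀ R)) ∈ N := fun i x =>
    (Submodule.mem_inf.1 (s i x).2).1
  have h3 : ∀ i (x : ↥(idl N i)), ((s i x : ι →₀ R)) ∈ Finsupp.supported R R (Set.Iic i) :=
    fun i x => (Submodule.mem_inf.1 (s i x).2).2
  -- the assembled map
  set Ψ : (Π₀ i, ↥(idl N i)) →ₗ[R] (ι →₀ R) :=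
    DFinsupp.lsum ℕ (fun i => (Nle i).subtype ∘ₗ s i) with hΨ
  have hΨsum : ∀ f : Π₀ i, ↥(idl N i), Ψ f = ∑ j ∈ f.support, ((s j (f j) : ι →₀ R)) := by
    intro f
    rw [hΨ, DFinsupp.lsum_apply_apply, DFinsupp.sumAddHom_apply]
    rfl
  have hΨmem : ∀ f, Ψ f ∈ N := by
    intro f
    rw [hΨsum]
    exact Submodule.sum_mem _ fun j _ => h2 j (f j)
  have hΨsingle : ∀ i (x : ↥(idl N i)), Ψ (DFinsupp.single i x) = ↑(s i x) := by
    intro i x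
    rw [hΨ, DFinsupp.lsum_single]
    rfl
  -- injectivity
  have hinj : Function.Injective Ψ := by
    rw [← LinearMap.ker_eq_bot, LinearMap.ker_eq_bot']
    intro f hf
    by_contra hne
    have hsupp : f.support.Nonempty := by
      rw [Finset.nonempty_iff_ne_empty]
      intro h
      exact hne (DFinsupp.support_eq_empty.1 h)
    set m := f.support.max' hsupp with hm
    have hmmem : m ∈ f.support := f.support.max'_mem hsupp
    have hcoord : (Ψ f) m = (f m : R) := by
      rw [hΨsum, Finsupp.finset_sum_apply]
      rw [Finset.sum_eq_single m ?side ?notmem]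
      · exact h1 m (f m)
      case side =>
        intro j hj hjm
        have hlt : j < m := lt_of_le_of_ne (f.support.le_max' j hj) hjm
        have hsup := (Finsupp.mem_supported R _).1 (h3 j (f j))
        show ((s j (f j) : ι →₀ R)) m = 0
        by_contra h0
        have := hsup (Finsupp.mem_support_iff.2 h0)
        rw [Set.mem_Iic] at this
        exact absurd this (not_le.2 hlt)
      case notmem => exact fun h => absurd hmmem h
    rw [hf] at hcoord
    simp only [Finsupp.coe_zero, Pi.zero_apply] at hcoord
    exact (DFinsupp.mem_support_iff.1 hmmem) (Subtype.ext hcoord.symm)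
  -- surjectivity onto N
  have step : ∀ i, ∀ x, x ∈ Nle i → ∃ f, Ψ f = x := by
    intro i
    induction i using WellFoundedLT.induction with
    | ind i IH =>
      intro x hx
      set y : ↥(Nle i) := s i (φ i ⟨x, hx⟩) with hy
      set z : ι →₀ R := x - ↑y with hzdef
      have hz1 : z i = 0 := by
        have hyi : ((y : ι →₀ R)) i = x i := by
          have := h1 i (φ i ⟨x, hx⟩)
          rw [this]
          simp [hφ, LinearMap.restrict_apply, Finsupp.lapply_apply]
        simp [hzdef, Finsupp.sub_apply, hyi]
      have hzN : z ∈ N := N.sub_mem (Submodule.mem_inf.1 hx).1 (h2 i (φ i ⟨x, hx⟩))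
      have hzsup : z ∈ Finsupp.supported R R (Set.Iic i) :=
        Submodule.sub_mem _ (Submodule.mem_inf.1 hx).2 (h3 i (φ i ⟨x, hx⟩))
      by_cases hz0 : z = 0
      · refine ⟨DFinsupp.single i (φ i ⟨x, hx⟩), ?_⟩
        rw [hΨsingle]
        have hxy : x - ↑y = 0 := hz0
        rw [sub_eq_zero] at hxy
        exact hxy.symm
      · have hns : z.support.Nonempty := Finsupp.support_nonempty_iff.2 hz0
        set k := z.support.max' hns with hk
        have hkmem : k ∈ z.support := z.support.max'_mem hns
        have hk1 : k ≤ i := Set.mem_Iic.1 ((Finsupp.mem_supported R _).1 hzsup (Finset.mem_coe.2 hkmem))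
        have hk2 : k ≠ i := fun h => (Finsupp.mem_support_iff.1 hkmem) (h ▸ hz1)
        have hklt : k < i := lt_of_le_of_ne hk1 hk2
        have hzle : z ∈ Nle k := by
          refine Submodule.mem_inf.2 ⟨hzN, (Finsupp.mem_supported R _).2 fun a ha => ?_⟩
          exact Set.mem_Iic.2 (z.support.le_max' a (Finset.mem_coe.1 ha))
        obtain ⟨g, hg⟩ := IH k hklt z hzle
        refine ⟨g + DFinsupp.single i (φ i ⟨x, hx⟩), ?_⟩
        rw [map_add, hg, hΨsingle]
        exact sub_add_cancel x ↑y
  have hsurj : ∀ x, x ∈ N → ∃ f, Ψ f = x := by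
    intro x hx
    by_cases hx0 : x = 0
    · exact ⟨0, by rw [map_zero, hx0]⟩
    · have hns : x.support.Nonempty := Finsupp.support_nonempty_iff.2 hx0
      set m := x.support.max' hns
      refine step m x (Submodule.mem_inf.2 ⟨hx, (Finsupp.mem_supported R _).2 fun a ha => ?_⟩)
      exact Set.mem_Iic.2 (x.support.le_max' a (Finset.mem_coe.1 ha))
  -- assemble the equivalence
  set Ψ' : (Π₀ i, ↥(idl N i)) →ₗ[R] ↥N := Ψ.codRestrict N hΨmem with hΨ'
  have hbij : Function.Bijective Ψ' := by
    constructor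
    · intro a b hab
      apply hinj
      have := congrArg (Subtype.val) hab
      simpa [hΨ', LinearMap.codRestrict_apply] using this
    · rintro ⟨x, hx⟩
      obtain ⟨f, hf⟩ := hsurj x hx
      exact ⟨f, Subtype.ext (by simpa [hΨ', LinearMap.codRestrict_apply] using hf)⟩
  exact ⟨(LinearEquiv.ofBijective Ψ' hbij).symm⟩


end Core

section Compl

variable {R : Type u} [Ring R]

theorem exists_isCompl_equiv_fst {M : Type v} {M₁ M₂ : Type w} [AddCommGroup M] [Module R M]
    [AddCommGroup M₁] [Module R M₁] [AddCommGroup M₂] [Module R M₂]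
    (e : M ≃ₗ[R] M₁ × M₂) :
    ∃ K : Submodule R M, (∃ K' : Submodule R M, IsCompl K K') ∧ Nonempty (↥K ≃ₗ[R] M₁) := by
  have hc : IsCompl (Submodule.fst R M₁ M₂) (Submodule.snd R M₁ M₂) := by
    constructor
    · rw [disjoint_iff, eq_bot_iff]
      rintro ⟨a, b⟩ h
      rw [Submodule.mem_inf] at h
      have h1 : b = 0 := h.1
      have h2 : a = 0 := h.2
      simp [Submodule.mem_bot, Prod.ext_iff, h1, h2]
    · rw [codisjoint_iff, eq_top_iff]
      rintro ⟨a, b⟩ -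
      rw [Submodule.mem_sup]
      refine ⟨(a, 0), ?_, (0, b), ?_, by simp⟩
      · show (0 : M₂) = 0; rfl
      · show (0 : M₁) = 0; rfl
  refine ⟨(Submodule.fst R M₁ M₂).map (e.symm : M₁ × M₂ →ₗ[R] M),
    ⟨(Submodule.snd R M₁ M₂).map (e.symm : M₁ × M₂ →ₗ[R] M), ?_⟩, ⟨?_⟩⟩
  · have := (Submodule.orderIsoMapComap (e.symm : (M₁ × M₂) ≃ₗ[R] M)).isCompl hc
    simpa [Submodule.orderIsoMapComap_apply'] using this
  · exact (e.symm.submoduleMap (Submodule.fst R M₁ M₂)).symm.trans (Submodule.fstEquiv R M₁ M₂)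


end Compl

section Main

variable {R : Type u} [Ring R]

theorem main_lemma {ι : Type w} (hR : IsCompletelyVirtuallySemisimple R R)
    (N P : Submodule R (ι →₀ R)) (hPN : P ≤ N) :
    ∃ K : Submodule R ↥N, (∃ K' : Submodule R ↥N, IsCompl K K') ∧
      Nonempty (↥P ≃ₗ[R] ↥K) := by
  classical
  obtain ⟨lo, wf⟩ := exists_wellOrder ι
  have hproj := projective_ideal (vs_self hR) (R := R)
  obtain ⟨eN⟩ := exists_equiv_dfinsupp hproj N
  obtain ⟨eP⟩ := exists_equiv_dfinsupp hproj P
  have hchoice : ∀ i, ∃ (K : Submodule R ↥(idl N i)) (K' : Submodule R ↥(idl N i)),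
      IsCompl K K' ∧ Nonempty (↥((idl P i).comap (idl N i).subtype) ≃ₗ[R] ↥K) := by
    intro i
    obtain ⟨K, ⟨K', hcmp⟩, hne⟩ := hR (idl N i) ((idl P i).comap (idl N i).subtype)
    exact ⟨K, K', hcmp, hne⟩
  choose K K' hcmp g using hchoice
  have e1 : ∀ i, ↥(idl P i) ≃ₗ[R] ↥(K i) := fun i =>
    (Submodule.comapSubtypeEquivOfLe (idl_mono hPN i)).symm.trans (Classical.choice (g i))
  have e2 : ∀ i, ↥(idl N i) ≃ₗ[R] ↥(K i) × ↥(K' i) := fun i =>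
    (Submodule.prodEquivOfIsCompl _ _ (hcmp i)).symm
  let E : ↥N ≃ₗ[R] (Π₀ i, ↥(K i)) × (Π₀ i, ↥(K' i)) :=
    (eN.trans (DFinsupp.mapRange.linearEquiv e2)).trans dfinsuppProd
  obtain ⟨Ksub, hKc, ⟨gK⟩⟩ := exists_isCompl_equiv_fst (R := R) (M := ↥N)
    (M₁ := Π₀ i, ↥(K i)) (M₂ := Π₀ i, ↥(K' i)) E
  exact ⟨Ksub, hKc, ⟨(eP.trans (DFinsupp.mapRange.linearEquiv e1)).trans gK.symm⟩⟩

theorem cvs_finsupp {ι : Type w} (hR : IsCompletelyVirtuallySemisimple R R) :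
    IsCompletelyVirtuallySemisimple R (ι →₀ R) := by
  intro N P'
  have hPN : P'.map N.subtype ≤ N := Submodule.map_subtype_le N P'
  obtain ⟨K, hKc, ⟨g⟩⟩ := main_lemma hR N (P'.map N.subtype) hPN
  exact ⟨K, hKc,
    ⟨(Submodule.equivMapOfInjective N.subtype (Submodule.injective_subtype N) P').trans g⟩⟩

end Main

end VSSAux

/-- A ring `R` is left completely virtually semisimple iff every free left `R`-module is
completely virtually semisimple; equivalently, iff every projective left `R`-module is
virtually semisimple. -/
theorem stmt_11 (R : Type u) [Ring R] :
    (IsCompletelyVirtuallySemisimple R R ↔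
      ∀ (M : Type (max u v)) [AddCommGroup M] [Module R M], Module.Free R M →
        IsCompletelyVirtuallySemisimple R M) ∧
    (IsCompletelyVirtuallySemisimple R R ↔
      ∀ (M : Type (max u v)) [AddCommGroup M] [Module R M], Module.Projective R M →
        IsVirtuallySemisimple R M) := by
  constructor
  · constructor
    · intro hR M _ _ hfree
      haveI := hfree
      exact VSSAux.cvs_congr (Module.Free.chooseBasis R M).repr (VSSAux.cvs_finsupp hR)
    · intro h
      haveI : Module.Free R (ULift.{v} R) := Module.Free.of_equiv ULift.moduleEquiv.symm
      exact VSSAux.cvs_congr ULift.moduleEquiv.symm (h (ULift.{v} R) inferInstance)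
  · constructor
    · intro hR M _ _ hproj
      obtain ⟨s, hs⟩ := Module.projective_def.1 hproj
      have hsinj : Function.Injective s := hs.injective
      exact VSSAux.vs_congr (LinearEquiv.ofInjective s hsinj)
        (VSSAux.cvs_finsupp hR (LinearMap.range s))
    · intro h
      haveI : Module.Projective R (ULift.{v} R) :=
        Module.Projective.of_equiv (ULift.moduleEquiv.symm : R ≃ₗ[R] ULift.{v} R)
      have hvsR : IsVirtuallySemisimple R R :=
        VSSAux.vs_congr ULift.moduleEquiv.symm (h (ULift.{v} R) inferInstance)
      intro I
      haveI : Module.Projective R ↥I := VSSAux.projective_ideal hvsR I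
      haveI : Module.Projective R (ULift.{max u v} ↥I) :=
        Module.Projective.of_equiv (ULift.moduleEquiv.symm : ↥I ≃ₗ[R] ULift.{max u v} ↥I)
      exact VSSAux.vs_congr (ULift.moduleEquiv.symm : ↥I ≃ₗ[R] ULift.{max u v} ↥I)
        (h (ULift.{max u v} ↥I) inferInstance)
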